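/- Let weights w₁,…,wₘ ∈ ℂ^× and let W = diag(w₁,…,wₘ). For partitions λ, ν of length at most n and x₁,…,xₘ ∈ ℂ, the determinant of the n×n matrix with (i,j)-entry ∑_{k=1}^m |wₖ|² conj(xₖ)^{λᵢ+n−i} xₖ^{νⱼ+n−j} equals ∑_{k ∈ C([m],n)} |w_k|² conj(s_λ(x_k)) s_ν(x_k) |V(x_k)|², where |w_k|² = ∏_{j=1}^n |w_{kⱼ}|². -/

import Mathlib

open scoped BigOperators ComplexConjugate Matrix

/-- Vandermonde product `V(z) = ∏_{i<j} (z_i − z_j)`. -/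
noncomputable def vand {n : ℕ} (z : Fin n → ℂ) : ℂ :=
  ∏ i : Fin n, ∏ j ∈ Finset.Ioi i, (z i - z j)

/-- Schur polynomial `s_λ(z) = det(z_i^{λ_j + n−1−j}) / V(z)` (junk value 0 if `V(z)=0`). -/
noncomputable def schur {n : ℕ} (lam : Fin n → ℕ) (z : Fin n → ℂ) : ℂ :=
  Matrix.det (Matrix.of fun i j : Fin n => z i ^ (lam j + (n - 1 - (j : ℕ)))) / vand z

/-- The subvector of `x` indexed by an `n`-element subset of `Fin m` (in increasing order). -/
def subvec {m n : ℕ} (x : Fin m → ℂ) (s : {t : Finset (Fin m) // t.card = n}) :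
    Fin n → ℂ := fun i => x (s.1.orderEmbOfFin s.2 i)

open Matrix Finset

/-- Cauchy–Binet formula. -/
lemma cauchy_binet {n m : ℕ} (A : Matrix (Fin n) (Fin m) ℂ) (B : Matrix (Fin m) (Fin n) ℂ) :
    (A * B).det = ∑ s : {t : Finset (Fin m) // t.card = n},
      (A.submatrix id (s.1.orderEmbOfFin s.2)).det *
        (B.submatrix (s.1.orderEmbOfFin s.2) id).det := by
  classical
  -- Step 1: expand by multilinearity in the rows
  have step1 : (A * B).det
      = ∑ f : Fin n → Fin m, (∏ i, A i (f i)) * (B.submatrix f id).det := by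
    have h1 : (A * B) = fun i => ∑ k, A i k • B k := by
      ext i j
      simp [Matrix.mul_apply]
    have := (Matrix.detRowAlternating (R := ℂ) (n := Fin n)).toMultilinearMap.map_sum
      (g := fun (i : Fin n) (k : Fin m) => A i k • B k)
    rw [show (A * B).det = Matrix.detRowAlternating (A * B) from rfl, h1]
    rw [show (Matrix.detRowAlternating (R := ℂ) (n := Fin n))
        (fun i => ∑ k, A i k • B k)
      = (Matrix.detRowAlternating (R := ℂ) (n := Fin n)).toMultilinearMap
        (fun i => ∑ k, (fun (i : Fin n) (k : Fin m) => A i k • B k) i k) from rfl, this]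
    refine Finset.sum_congr rfl fun f _ => ?_
    rw [show ((Matrix.detRowAlternating (R := ℂ) (n := Fin n)).toMultilinearMap
        fun i => A i (f i) • B (f i))
      = (Matrix.detRowAlternating (R := ℂ) (n := Fin n)).toMultilinearMap
        fun i => A i (f i) • (fun i => B (f i)) i from rfl]
    rw [MultilinearMap.map_smul_univ]
    rfl
  -- Step 2: restrict to injective functions
  have step2 : ∑ f : Fin n → Fin m, (∏ i, A i (f i)) * (B.submatrix f id).det
      = ∑ f ∈ Finset.univ.filter (fun f : Fin n → Fin m => Function.Injective f),
          (∏ i, A i (f i)) * (B.submatrix f id).det := by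
    symm
    apply Finset.sum_subset (Finset.filter_subset _ _)
    intro f _ hf
    simp only [Finset.mem_filter, Finset.mem_univ, true_and] at hf
    rw [Function.Injective] at hf
    push_neg at hf
    obtain ⟨i, j, hij, hne⟩ := hf
    have : (B.submatrix f id).det = 0 :=
      Matrix.det_zero_of_row_eq hne (by ext k; simp [hij])
    rw [this, mul_zero]
  -- Step 3: reindex injective functions by (subset, permutation) pairs
  have step3 : ∑ f ∈ Finset.univ.filter (fun f : Fin n → Fin m => Function.Injective f),
        (∏ i, A i (f i)) * (B.submatrix f id).det
      = ∑ p : {t : Finset (Fin m) // t.card = n} × Equiv.Perm (Fin n),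
          (∏ i, A i (p.1.1.orderEmbOfFin p.1.2 (p.2 i))) *
            (B.submatrix (fun i => p.1.1.orderEmbOfFin p.1.2 (p.2 i)) id).det := by
    symm
    refine Finset.sum_bij
      (fun p _ => fun i => p.1.1.orderEmbOfFin p.1.2 (p.2 i)) ?_ ?_ ?_ ?_
    · intro p _
      simp only [Finset.mem_filter, Finset.mem_univ, true_and]
      exact fun a b hab => p.2.injective ((p.1.1.orderEmbOfFin p.1.2).injective hab)
    · -- injectivity
      intro p _ q _ hpq
      replace hpq : (fun i => p.1.1.orderEmbOfFin p.1.2 (p.2 i))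
          = (fun i => q.1.1.orderEmbOfFin q.1.2 (q.2 i)) := hpq
      have himg : ∀ (r : {t : Finset (Fin m) // t.card = n} × Equiv.Perm (Fin n)),
          Finset.image (fun i => r.1.1.orderEmbOfFin r.1.2 (r.2 i)) Finset.univ = r.1.1 := by
        intro r
        ext a
        simp only [Finset.mem_image, Finset.mem_univ, true_and]
        constructor
        · rintro ⟨i, rfl⟩
          exact Finset.orderEmbOfFin_mem r.1.1 r.1.2 _
        · intro ha
          rw [← Finset.mem_coe, ← Finset.range_orderEmbOfFin r.1.1 r.1.2] at ha
          obtain ⟨i, hi⟩ := ha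
          exact ⟨r.2.symm i, by simp [hi]⟩
      have h1 : p.1 = q.1 := by
        apply Subtype.ext
        rw [← himg p, ← himg q]
        exact congrArg (fun f => Finset.image f Finset.univ) hpq
      obtain ⟨⟨s, hs⟩, σ⟩ := p
      obtain ⟨⟨t, ht⟩, τ⟩ := q
      simp only at h1
      obtain rfl : s = t := congrArg Subtype.val h1
      have hστ : σ = τ := by
        apply Equiv.ext
        intro i
        exact (s.orderEmbOfFin hs).injective (congrFun hpq i)
      rw [hστ]
    · -- surjectivity
      intro f hf
      simp only [Finset.mem_filter, Finset.mem_univ, true_and] at hf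
      have hcard : (Finset.image f Finset.univ).card = n := by
        rw [Finset.card_image_of_injective _ hf, Finset.card_univ, Fintype.card_fin]
      set s : Finset (Fin m) := Finset.image f Finset.univ with hsdef
      have hmem : ∀ i, f i ∈ s := fun i => Finset.mem_image_of_mem f (Finset.mem_univ i)
      set g : Fin n → Fin n := fun i => (s.orderIsoOfFin hcard).symm ⟨f i, hmem i⟩ with hgdef
      have hg : Function.Injective g := by
        intro a b hab
        apply hf
        have h2 := congrArg (fun z : Fin n => ((s.orderIsoOfFin hcard) z : Fin m)) hab
        simpa [hgdef] using h2
      have hgbij := Finite.injective_iff_bijective.mp hg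
      refine ⟨⟨⟨s, hcard⟩, Equiv.ofBijective g hgbij⟩, Finset.mem_univ _, ?_⟩
      funext i
      show s.orderEmbOfFin hcard (g i) = f i
      rw [← Finset.coe_orderIsoOfFin_apply]
      simp [hgdef]
    · intro p _
      rfl
  rw [step1, step2, step3, Fintype.sum_prod_type]
  refine Finset.sum_congr rfl fun s _ => ?_
  -- Step 4: sum over permutations gives det of the column-submatrix of A
  set e := s.1.orderEmbOfFin s.2 with he
  have hperm : ∀ σ : Equiv.Perm (Fin n),
      (B.submatrix (fun i => e (σ i)) id).det
        = (Equiv.Perm.sign σ : ℤ) * (B.submatrix (⇑e) id).det := by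
    intro σ
    have : (B.submatrix (fun i => e (σ i)) id) = (B.submatrix (⇑e) id).submatrix σ id := by
      ext i j; rfl
    rw [this, Matrix.det_permute]
  calc ∑ σ : Equiv.Perm (Fin n), (∏ i, A i (e (σ i))) *
          (B.submatrix (fun i => e (σ i)) id).det
      = (∑ σ : Equiv.Perm (Fin n), ((Equiv.Perm.sign σ : ℤ) : ℂ) * ∏ i, A i (e (σ i))) *
          (B.submatrix (⇑e) id).det := by
        rw [Finset.sum_mul]
        refine Finset.sum_congr rfl fun σ _ => ?_
        rw [hperm σ]; ring
    _ = (A.submatrix id (⇑e)).det * (B.submatrix (⇑e) id).det := by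
        congr 1
        rw [← Matrix.det_transpose (A.submatrix id ⇑e), Matrix.det_apply']
        rfl

/-- The generalized Vandermonde determinant equals Schur times Vandermonde. -/
lemma det_pow_eq_schur_mul_vand {n : ℕ} (lam : Fin n → ℕ) (z : Fin n → ℂ) :
    Matrix.det (Matrix.of fun i j : Fin n => z i ^ (lam j + (n - 1 - (j : ℕ))))
      = schur lam z * vand z := by
  by_cases h : vand z = 0
  · rw [schur, h, mul_zero]
    -- vand z = 0 means two coordinates are equal
    rw [vand] at h
    obtain ⟨i, -, hi⟩ := Finset.prod_eq_zero_iff.mp h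
    obtain ⟨j, hj, hij⟩ := Finset.prod_eq_zero_iff.mp hi
    have hzij : z i = z j := by linear_combination hij
    have hne : i ≠ j := ne_of_lt (Finset.mem_Ioi.mp hj)
    exact Matrix.det_zero_of_row_eq hne (by ext k; simp [hzij])
  · rw [schur, div_mul_cancel₀ _ h]

lemma conj_vand {n : ℕ} (z : Fin n → ℂ) : conj (vand z) = vand (fun i => conj (z i)) := by
  simp [vand, map_prod, map_sub]

lemma conj_schur {n : ℕ} (lam : Fin n → ℕ) (z : Fin n → ℂ) :
    conj (schur lam z) = schur lam (fun i => conj (z i)) := by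
  rw [schur, schur, map_div₀, conj_vand]
  congr 1
  rw [RingHom.map_det]
  congr 1
  ext i j
  simp [RingHom.mapMatrix_apply, map_pow]

/-- weighted Cauchy–Binet for Schur/Vandermonde sums: for nonzero weights
`w₁,…,wₘ` and partitions `λ, ν` of length at most `n`, the determinant of the matrix with
entries `∑ₖ |wₖ|² conj(xₖ)^{λᵢ+n−i} xₖ^{νⱼ+n−j}` equals
`∑_{k ∈ C([m],n)} |w_k|² conj(s_λ(x_k)) s_ν(x_k) |V(x_k)|²` with `|w_k|² = ∏ⱼ |w_{kⱼ}|²`. -/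
theorem weighted_det_eq_sum_schur (m n : ℕ)
    (w : Fin m → ℂ) (hw : ∀ k, w k ≠ 0)
    (lam nu : Fin n → ℕ) (hlam : Antitone lam) (hnu : Antitone nu) (x : Fin m → ℂ) :
    Matrix.det (Matrix.of fun i j : Fin n =>
        ∑ k : Fin m, ((‖w k‖ : ℝ) : ℂ) ^ 2 *
          (conj (x k) ^ (lam i + (n - 1 - (i : ℕ))) * x k ^ (nu j + (n - 1 - (j : ℕ))))) =
      ∑ s : {t : Finset (Fin m) // t.card = n},
        (∏ j : Fin n, ((‖w (s.1.orderEmbOfFin s.2 j)‖ : ℝ) : ℂ) ^ 2) *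
          (conj (schur lam (subvec x s)) * schur nu (subvec x s) *
            ((‖vand (subvec x s)‖ : ℝ) : ℂ) ^ 2) := by
  classical
  have habs2 : ∀ z : ℂ, ((‖z‖ : ℝ) : ℂ) ^ 2 = conj z * z := fun z => by
    rw [mul_comm, Complex.mul_conj, ← Complex.ofReal_pow, Complex.sq_norm]
  set A : Matrix (Fin n) (Fin m) ℂ :=
    Matrix.of fun i k => conj (w k) * conj (x k) ^ (lam i + (n - 1 - (i : ℕ))) with hA
  set B : Matrix (Fin m) (Fin n) ℂ :=
    Matrix.of fun k j => w k * x k ^ (nu j + (n - 1 - (j : ℕ))) with hB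
  have hM : (Matrix.of fun i j : Fin n =>
      ∑ k : Fin m, ((‖w k‖ : ℝ) : ℂ) ^ 2 *
        (conj (x k) ^ (lam i + (n - 1 - (i : ℕ))) * x k ^ (nu j + (n - 1 - (j : ℕ)))))
      = A * B := by
    ext i j
    simp only [Matrix.mul_apply, Matrix.of_apply, hA, hB, habs2]
    exact Finset.sum_congr rfl fun k _ => by ring
  rw [hM, cauchy_binet]
  refine Finset.sum_congr rfl fun s _ => ?_
  set e := s.1.orderEmbOfFin s.2 with he
  set u := subvec x s with hu
  have hdetA : (A.submatrix id ⇑e).det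
      = (∏ j, conj (w (e j))) * (conj (schur lam u) * conj (vand u)) := by
    have h1 : A.submatrix id ⇑e = Matrix.of fun i j =>
        (fun j => conj (w (e j))) j *
          ((Matrix.of fun i j : Fin n =>
            (conj (u i)) ^ (lam j + (n - 1 - (j : ℕ))))ᵀ i j) := by
      ext i j
      simp [hA, hu, subvec, he, Matrix.transpose_apply]
    rw [h1, Matrix.det_mul_row, Matrix.det_transpose, det_pow_eq_schur_mul_vand,
        conj_schur, conj_vand]
  have hdetB : (B.submatrix (⇑e) id).det
      = (∏ j, w (e j)) * (schur nu u * vand u) := by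
    have h1 : B.submatrix (⇑e) id = Matrix.of fun i j =>
        (fun i => w (e i)) i *
          ((Matrix.of fun i j : Fin n => (u i) ^ (nu j + (n - 1 - (j : ℕ)))) i j) := by
      ext i j
      simp [hB, hu, subvec, he]
    rw [h1, Matrix.det_mul_column, det_pow_eq_schur_mul_vand]
  rw [hdetA, hdetB]
  simp only [habs2]
  rw [Finset.prod_mul_distrib]
  ring
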